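/- Let a, b ∈ ℝ with b ≠ 0 and define φ(ξ) = b ξ⁴ + a ξ² for ξ ∈ ℝ. Then there is a constant C > 0, independent of a and b, such that the oscillatory integral I_φ(x) = ∫_ℝ exp(i φ(ξ) + i x ξ) dξ satisfies |I_φ(x)| ≤ C |b|^{-1/4} for all x ∈ ℝ. -/

import Mathlib

open MeasureTheory Filter Set
open scoped ENNReal Topology

noncomputable section

namespace VdC

/-- the phase -/
def ph (b a x ξ : ℝ) : ℝ := b * ξ ^ 4 + a * ξ ^ 2 + x * ξ
def ph1 (b a x ξ : ℝ) : ℝ := 4 * b * ξ ^ 3 + 2 * a * ξ + x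
def ph2 (b a ξ : ℝ) : ℝ := 12 * b * ξ ^ 2 + 2 * a

/-- the integrand -/
def EE (b a x : ℝ) (ξ : ℝ) : ℂ :=
  Complex.exp (Complex.I * ((b * ξ ^ 4 + a * ξ ^ 2 + x * ξ : ℝ) : ℂ))

lemma contEE (b a x : ℝ) : Continuous (EE b a x) := by
  unfold EE; fun_prop

lemma normEE (b a x ξ : ℝ) : ‖EE b a x ξ‖ = 1 := by
  unfold EE; rw [mul_comm]; exact Complex.norm_exp_ofReal_mul_I _

lemma intgEE (b a x u v : ℝ) : IntervalIntegrable (EE b a x) volume u v :=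
  (contEE b a x).intervalIntegrable u v

lemma hasDerivAt_ph (b a x ξ : ℝ) : HasDerivAt (ph b a x) (ph1 b a x ξ) ξ := by
  unfold ph ph1
  have : HasDerivAt (fun ξ : ℝ => b * ξ ^ 4 + a * ξ ^ 2 + x * ξ)
      (b * (4 * ξ ^ 3) + a * (2 * ξ ^ 1) + x * 1) ξ := by
    exact (((hasDerivAt_pow 4 ξ).const_mul b).add ((hasDerivAt_pow 2 ξ).const_mul a)).add
      ((hasDerivAt_id ξ).const_mul x)
  convert this using 1
  ring

lemma hasDerivAt_ph1 (b a x ξ : ℝ) : HasDerivAt (ph1 b a x) (ph2 b a ξ) ξ := by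
  unfold ph1 ph2
  have : HasDerivAt (fun ξ : ℝ => 4 * b * ξ ^ 3 + 2 * a * ξ + x)
      (4 * b * (3 * ξ ^ 2) + 2 * a * 1 + 0) ξ := by
    exact (((hasDerivAt_pow 3 ξ).const_mul (4 * b)).add
      ((hasDerivAt_id ξ).const_mul (2 * a))).add (hasDerivAt_const ξ x)
  convert this using 1
  ring

lemma trivial_bound (b a x u v : ℝ) (h : u ≤ v) :
    ‖∫ ξ in u..v, EE b a x ξ‖ ≤ v - u := by
  have := intervalIntegral.norm_integral_le_of_norm_le_const
    (a := u) (b := v) (C := 1) (f := EE b a x) (fun ξ _ => le_of_eq (normEE b a x ξ))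
  simpa [abs_of_nonneg (sub_nonneg.2 h)] using this

/-- sign of ph1 is constant on an interval where |ph1| ≥ λ -/
lemma sign_const (b a x u v lam : ℝ) (huv : u ≤ v) (hlam : 0 < lam)
    (hlow : ∀ ξ ∈ Icc u v, lam ≤ |ph1 b a x ξ|) :
    (∀ ξ ∈ Icc u v, lam ≤ ph1 b a x ξ) ∨ (∀ ξ ∈ Icc u v, ph1 b a x ξ ≤ -lam) := by
  have hcont : Continuous (ph1 b a x) := by unfold ph1; fun_prop
  have key : ∀ ξ₁ ∈ Icc u v, ∀ ξ₂ ∈ Icc u v, lam ≤ ph1 b a x ξ₁ → ph1 b a x ξ₂ ≤ -lam → False := by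
    intro ξ₁ h₁ ξ₂ h₂ hp hn
    have h0 : (0:ℝ) ∈ uIcc (ph1 b a x ξ₁) (ph1 b a x ξ₂) := by
      rw [Set.mem_uIcc]
      right; constructor <;> linarith
    have h0' : (0:ℝ) ∈ uIcc (ph1 b a x ξ₂) (ph1 b a x ξ₁) := by
      rwa [Set.uIcc_comm]
    obtain ⟨c, hc, hc0⟩ := intermediate_value_uIcc (hcont.continuousOn
      (s := uIcc ξ₂ ξ₁)) h0'
    have : c ∈ Icc u v := Set.uIcc_subset_Icc h₂ h₁ hc
    have := hlow c this
    rw [hc0] at this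
    simp at this
    linarith
  rcases le_or_gt lam (ph1 b a x u) with h | h
  · left
    intro ξ hξ
    by_contra hcon
    push_neg at hcon
    have := hlow ξ hξ
    have hneg : ph1 b a x ξ ≤ -lam := by
      rcases le_abs.mp this with h' | h'
      · linarith
      · linarith
    exact key u (Set.left_mem_Icc.2 huv) ξ hξ h hneg
  · right
    intro ξ hξ
    by_contra hcon
    push_neg at hcon
    have hu : ph1 b a x u ≤ -lam := by
      rcases le_abs.mp (hlow u (Set.left_mem_Icc.2 huv)) with h' | h'
      · linarith
      · linarith
    have hξp : lam ≤ ph1 b a x ξ := by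
      rcases le_abs.mp (hlow ξ hξ) with h' | h'
      · linarith
      · linarith
    exact key ξ hξ u (Set.left_mem_Icc.2 huv) hξp hu

/-- Integration by parts: first-derivative van der Corput bound on an interval where
`|ph1| ≥ lam` and `ph2` has constant sign. -/
lemma ibp_bound (b a x u v lam : ℝ) (huv : u ≤ v) (hlam : 0 < lam)
    (hlow : ∀ ξ ∈ Icc u v, lam ≤ |ph1 b a x ξ|)
    (hsign : (∀ ξ ∈ Icc u v, 0 ≤ ph2 b a ξ) ∨ (∀ ξ ∈ Icc u v, ph2 b a ξ ≤ 0)) :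
    ‖∫ ξ in u..v, EE b a x ξ‖ ≤ 3 / lam := by
  have huIcc : Set.uIcc u v = Icc u v := Set.uIcc_of_le huv
  have hne : ∀ ξ ∈ Icc u v, ph1 b a x ξ ≠ 0 := by
    intro ξ hξ h0
    have := hlow ξ hξ
    rw [h0] at this; simp at this; linarith
  have hneC : ∀ ξ ∈ Icc u v, (Complex.I * (ph1 b a x ξ : ℂ)) ≠ 0 := by
    intro ξ hξ
    simp [Complex.I_ne_zero, Complex.ofReal_eq_zero, hne ξ hξ]
  -- F and its derivative
  set F : ℝ → ℂ := fun ξ => EE b a x ξ * (Complex.I * (ph1 b a x ξ : ℂ))⁻¹ with hF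
  set G : ℝ → ℂ := fun ξ =>
    EE b a x ξ * ((ph2 b a ξ : ℂ) * Complex.I) * ((Complex.I * (ph1 b a x ξ : ℂ)) ^ 2)⁻¹ with hG
  have hFderiv : ∀ ξ ∈ Set.uIcc u v, HasDerivAt F (EE b a x ξ - G ξ) ξ := by
    intro ξ hξ
    rw [huIcc] at hξ
    have h1 : HasDerivAt (fun ξ : ℝ => ((ph b a x ξ : ℝ) : ℂ)) ((ph1 b a x ξ : ℝ) : ℂ) ξ :=
      (hasDerivAt_ph b a x ξ).ofReal_comp
    have h2 : HasDerivAt (fun ξ : ℝ => Complex.I * ((ph b a x ξ : ℝ) : ℂ))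
        (Complex.I * ((ph1 b a x ξ : ℝ) : ℂ)) ξ := h1.const_mul _
    have hE : HasDerivAt (EE b a x)
        (Complex.exp (Complex.I * ((ph b a x ξ : ℝ):ℂ)) * (Complex.I * ((ph1 b a x ξ:ℝ):ℂ))) ξ := by
      have := h2.cexp
      convert this using 2
      rfl
    have hph1C : HasDerivAt (fun ξ : ℝ => Complex.I * ((ph1 b a x ξ : ℝ) : ℂ))
        (Complex.I * ((ph2 b a ξ : ℝ) : ℂ)) ξ :=
      ((hasDerivAt_ph1 b a x ξ).ofReal_comp).const_mul _
    have hinv : HasDerivAt (fun ξ : ℝ => (Complex.I * ((ph1 b a x ξ : ℝ) : ℂ))⁻¹)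
        (-(Complex.I * ((ph2 b a ξ : ℝ) : ℂ)) / (Complex.I * ((ph1 b a x ξ : ℝ) : ℂ)) ^ 2) ξ := by
      have hcomp := (hasDerivAt_inv (hneC ξ hξ)).comp ξ hph1C
      refine hcomp.congr_deriv ?_
      ring
    have hEE : HasDerivAt (EE b a x) (EE b a x ξ * (Complex.I * ((ph1 b a x ξ:ℝ):ℂ))) ξ := by
      simpa [EE, ph] using hE
    have hprod := hEE.mul hinv
    refine hprod.congr_deriv (Eq.symm ?_)
    rw [hG]
    have hI := hneC ξ hξ
    have hp : ((ph1 b a x ξ : ℝ) : ℂ) ≠ 0 := by exact_mod_cast hne ξ hξ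
    field_simp
    ring
  have hcont1 : ContinuousOn (fun ξ => ph1 b a x ξ) (Icc u v) := by
    unfold ph1; fun_prop
  have hcont2 : Continuous (fun ξ => ph2 b a ξ) := by unfold ph2; fun_prop
  have hGcont : ContinuousOn G (Icc u v) := by
    apply ContinuousOn.mul
    apply ContinuousOn.mul
    · exact (contEE b a x).continuousOn
    · fun_prop
    · apply ContinuousOn.inv₀
      · apply ContinuousOn.pow
        exact (continuousOn_const.mul (Complex.continuous_ofReal.comp_continuousOn hcont1))
      · intro ξ hξ
        exact pow_ne_zero _ (hneC ξ hξ)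
  have hGint : IntervalIntegrable G volume u v := by
    apply ContinuousOn.intervalIntegrable
    rwa [huIcc]
  have hFGint : IntervalIntegrable (fun ξ => EE b a x ξ - G ξ) volume u v :=
    (intgEE b a x u v).sub hGint
  have hFTC : ∫ ξ in u..v, (EE b a x ξ - G ξ) = F v - F u :=
    intervalIntegral.integral_eq_sub_of_hasDerivAt hFderiv hFGint
  have hsplit : ∫ ξ in u..v, EE b a x ξ = (F v - F u) + ∫ ξ in u..v, G ξ := by
    rw [← hFTC, intervalIntegral.integral_sub (intgEE b a x u v) hGint]
    ring
  -- bound ‖F w‖ ≤ 1/lam for w endpoint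
  have hFbound : ∀ w ∈ Icc u v, ‖F w‖ ≤ 1 / lam := by
    intro w hw
    rw [hF]
    simp only [norm_mul, normEE, one_mul, norm_inv, Complex.norm_I, Complex.norm_real,
      Real.norm_eq_abs]
    rw [one_div]
    exact inv_anti₀ hlam (hlow w hw)
  -- bound ∫ G
  have hGnorm : ∀ ξ ∈ Icc u v, ‖G ξ‖ = |ph2 b a ξ| / (ph1 b a x ξ) ^ 2 := by
    intro ξ hξ
    rw [hG]
    simp only [norm_mul, normEE, one_mul, norm_inv, norm_pow, Complex.norm_I, Complex.norm_real,
      Real.norm_eq_abs, mul_one]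
    rw [sq_abs]
    ring
  -- FTC for |ph2|/ph1² : antiderivative ∓ (ph1)⁻¹
  have hIntNorm : (∫ ξ in u..v, ‖G ξ‖) ≤ 1 / lam := by
    have hcongr : ∫ ξ in u..v, ‖G ξ‖ = ∫ ξ in u..v, |ph2 b a ξ| / (ph1 b a x ξ) ^ 2 := by
      apply intervalIntegral.integral_congr
      intro ξ hξ
      rw [huIcc] at hξ
      exact hGnorm ξ hξ
    rw [hcongr]
    -- two cases on sign of ph2
    have hder : ∀ (c : ℝ), (c = 1 ∨ c = -1) →
        (∀ ξ ∈ Icc u v, HasDerivAt (fun ξ => -c * (ph1 b a x ξ)⁻¹)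
          (c * ph2 b a ξ / (ph1 b a x ξ) ^ 2) ξ) := by
      intro c _ ξ hξ
      have hinv : HasDerivAt (fun ξ => (ph1 b a x ξ)⁻¹)
          (-(ph2 b a ξ) / (ph1 b a x ξ) ^ 2) ξ :=
        (hasDerivAt_ph1 b a x ξ).inv (hne ξ hξ)
      have := hinv.const_mul (-c)
      refine this.congr_deriv ?_
      ring
    have hintc : ∀ (c : ℝ), IntervalIntegrable (fun ξ => c * ph2 b a ξ / (ph1 b a x ξ) ^ 2)
        volume u v := by
      intro c
      apply ContinuousOn.intervalIntegrable
      rw [huIcc]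
      apply ContinuousOn.div
      · fun_prop
      · fun_prop
      · intro ξ hξ
        exact pow_ne_zero _ (hne ξ hξ)
    -- the endpoint difference bound
    have hinv_bound : |(ph1 b a x u)⁻¹ - (ph1 b a x v)⁻¹| ≤ 1 / lam := by
      have hu' : u ∈ Icc u v := Set.left_mem_Icc.2 huv
      have hv' : v ∈ Icc u v := Set.right_mem_Icc.2 huv
      rcases sign_const b a x u v lam huv hlam hlow with hpos | hneg
      · have h1 : 0 < ph1 b a x u := lt_of_lt_of_le hlam (hpos u hu')
        have h2 : 0 < ph1 b a x v := lt_of_lt_of_le hlam (hpos v hv')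
        have i1 : (ph1 b a x u)⁻¹ ≤ 1 / lam := by
          rw [one_div]; exact inv_anti₀ hlam (hpos u hu')
        have i2 : (ph1 b a x v)⁻¹ ≤ 1 / lam := by
          rw [one_div]; exact inv_anti₀ hlam (hpos v hv')
        have i3 : 0 < (ph1 b a x u)⁻¹ := by positivity
        have i4 : 0 < (ph1 b a x v)⁻¹ := by positivity
        rw [abs_sub_le_iff]; constructor <;> linarith
      · have h1 : ph1 b a x u < 0 := lt_of_le_of_lt (hneg u hu') (by linarith)
        have h2 : ph1 b a x v < 0 := lt_of_le_of_lt (hneg v hv') (by linarith)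
        have i1 : -(1 / lam) ≤ (ph1 b a x u)⁻¹ := by
          rw [neg_le, ← inv_neg, one_div]
          exact inv_anti₀ hlam (by linarith [hneg u hu'])
        have i2 : -(1 / lam) ≤ (ph1 b a x v)⁻¹ := by
          rw [neg_le, ← inv_neg, one_div]
          exact inv_anti₀ hlam (by linarith [hneg v hv'])
        have i3 : (ph1 b a x u)⁻¹ < 0 := inv_lt_zero.mpr h1
        have i4 : (ph1 b a x v)⁻¹ < 0 := inv_lt_zero.mpr h2
        rw [abs_sub_le_iff]; constructor <;> linarith
    rcases hsign with hpos2 | hneg2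
    · have : ∫ ξ in u..v, |ph2 b a ξ| / (ph1 b a x ξ) ^ 2
          = ∫ ξ in u..v, (1:ℝ) * ph2 b a ξ / (ph1 b a x ξ) ^ 2 := by
        apply intervalIntegral.integral_congr
        intro ξ hξ
        rw [huIcc] at hξ
        dsimp only
        rw [abs_of_nonneg (hpos2 ξ hξ)]; ring
      rw [this]
      have := intervalIntegral.integral_eq_sub_of_hasDerivAt
        (f := fun ξ => -(1:ℝ) * (ph1 b a x ξ)⁻¹)
        (f' := fun ξ => (1:ℝ) * ph2 b a ξ / (ph1 b a x ξ) ^ 2)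
        (fun ξ hξ => hder 1 (Or.inl rfl) ξ (huIcc ▸ hξ)) (hintc 1)
      rw [this]
      calc -(1:ℝ) * (ph1 b a x v)⁻¹ - -(1:ℝ) * (ph1 b a x u)⁻¹
          = (ph1 b a x u)⁻¹ - (ph1 b a x v)⁻¹ := by ring
        _ ≤ |(ph1 b a x u)⁻¹ - (ph1 b a x v)⁻¹| := le_abs_self _
        _ ≤ 1 / lam := hinv_bound
    · have : ∫ ξ in u..v, |ph2 b a ξ| / (ph1 b a x ξ) ^ 2
          = ∫ ξ in u..v, (-1:ℝ) * ph2 b a ξ / (ph1 b a x ξ) ^ 2 := by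
        apply intervalIntegral.integral_congr
        intro ξ hξ
        rw [huIcc] at hξ
        dsimp only
        rw [abs_of_nonpos (hneg2 ξ hξ)]; ring
      rw [this]
      have := intervalIntegral.integral_eq_sub_of_hasDerivAt
        (f := fun ξ => -(-1:ℝ) * (ph1 b a x ξ)⁻¹)
        (f' := fun ξ => (-1:ℝ) * ph2 b a ξ / (ph1 b a x ξ) ^ 2)
        (fun ξ hξ => hder (-1) (Or.inr rfl) ξ (huIcc ▸ hξ)) (hintc (-1))
      rw [this]
      calc -(-1:ℝ) * (ph1 b a x v)⁻¹ - -(-1:ℝ) * (ph1 b a x u)⁻¹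
          = -((ph1 b a x u)⁻¹ - (ph1 b a x v)⁻¹) := by ring
        _ ≤ |(ph1 b a x u)⁻¹ - (ph1 b a x v)⁻¹| := neg_le_abs _
        _ ≤ 1 / lam := hinv_bound
  -- assemble
  rw [hsplit]
  have hGle : ‖∫ ξ in u..v, G ξ‖ ≤ 1 / lam :=
    le_trans (intervalIntegral.norm_integral_le_integral_norm huv) hIntNorm
  have h3 : ‖F v - F u‖ ≤ 1 / lam + 1 / lam :=
    le_trans (norm_sub_le _ _) (add_le_add (hFbound v (Set.right_mem_Icc.2 huv))
      (hFbound u (Set.left_mem_Icc.2 huv)))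
  calc ‖(F v - F u) + ∫ ξ in u..v, G ξ‖ ≤ ‖F v - F u‖ + ‖∫ ξ in u..v, G ξ‖ := norm_add_le _ _
    _ ≤ (1 / lam + 1 / lam) + 1 / lam := add_le_add h3 hGle
    _ = 3 / lam := by ring
/-- On an interval where `|ph1| ≥ lam`, splitting at the (at most two) sign changes of `ph2`
gives the bound `9 / lam` (case `b > 0`). -/
lemma good_bound (b a x u v lam : ℝ) (hb : 0 < b) (huv : u ≤ v) (hlam : 0 < lam)
    (hlow : ∀ ξ ∈ Icc u v, lam ≤ |ph1 b a x ξ|) :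
    ‖∫ ξ in u..v, EE b a x ξ‖ ≤ 9 / lam := by
  have h39 : (3:ℝ) / lam ≤ 9 / lam := by gcongr; norm_num
  have h03 : (0:ℝ) ≤ 3 / lam := by positivity
  rcases le_or_gt 0 a with ha | ha
  · -- ph2 ≥ 0 everywhere
    refine le_trans (ibp_bound b a x u v lam huv hlam hlow (Or.inl ?_)) h39
    intro ξ _
    unfold ph2
    nlinarith [sq_nonneg ξ]
  · set s := Real.sqrt (-a / (6 * b)) with hs
    have hsnn : 0 ≤ s := Real.sqrt_nonneg _
    have hs2 : s ^ 2 = -a / (6 * b) :=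
      Real.sq_sqrt (div_nonneg (by linarith) (by linarith))
    have h6b : (6:ℝ) * b ≠ 0 := by positivity
    have hs2' : s ^ 2 * (6 * b) = -a := (eq_div_iff h6b).mp hs2
    have ha6 : a = -(6 * b * s ^ 2) := by linear_combination hs2'
    have sign_out : ∀ ξ : ℝ, ξ ≤ -s ∨ s ≤ ξ → 0 ≤ ph2 b a ξ := by
      intro ξ hξ
      unfold ph2
      rcases hξ with h | h
      · have hprod : 0 ≤ (ξ + s) * (ξ - s) := by
          nlinarith [mul_nonneg (neg_nonneg.mpr (show ξ + s ≤ 0 by linarith))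
            (neg_nonneg.mpr (show ξ - s ≤ 0 by linarith))]
        nlinarith [mul_nonneg hb.le hprod]
      · have hprod : 0 ≤ (ξ + s) * (ξ - s) :=
          mul_nonneg (by linarith) (by linarith)
        nlinarith [mul_nonneg hb.le hprod]
    have sign_in : ∀ ξ : ℝ, -s ≤ ξ → ξ ≤ s → ph2 b a ξ ≤ 0 := by
      intro ξ h1 h2
      unfold ph2
      have hprod : (ξ + s) * (ξ - s) ≤ 0 :=
        mul_nonpos_iff.mpr (Or.inl ⟨by linarith, by linarith⟩)
      nlinarith [mul_nonneg hb.le (neg_nonneg.mpr hprod)]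
    rcases le_or_gt v (-s) with hv | hv
    · refine le_trans (ibp_bound b a x u v lam huv hlam hlow (Or.inl ?_)) h39
      intro ξ hξ
      exact sign_out ξ (Or.inl (le_trans hξ.2 hv))
    rcases le_or_gt s u with hu | hu
    · refine le_trans (ibp_bound b a x u v lam huv hlam hlow (Or.inl ?_)) h39
      intro ξ hξ
      exact sign_out ξ (Or.inr (le_trans hu hξ.1))
    -- main case : split at p₁ = max u (-s), p₂ = min v s
    set p₁ := max u (-s) with hp₁
    set p₂ := min v s with hp₂
    have h_u_p₁ : u ≤ p₁ := le_max_left _ _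
    have h_p₁_p₂ : p₁ ≤ p₂ := by
      apply max_le
      · exact le_min huv hu.le
      · exact le_min hv.le (by linarith)
    have h_p₂_v : p₂ ≤ v := min_le_left _ _
    have hsub1 : Icc u p₁ ⊆ Icc u v := Icc_subset_Icc le_rfl (le_trans h_p₁_p₂ h_p₂_v)
    have hsub2 : Icc p₁ p₂ ⊆ Icc u v := Icc_subset_Icc h_u_p₁ h_p₂_v
    have hsub3 : Icc p₂ v ⊆ Icc u v := Icc_subset_Icc (le_trans h_u_p₁ h_p₁_p₂) le_rfl
    have bd1 : ‖∫ ξ in u..p₁, EE b a x ξ‖ ≤ 3 / lam := by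
      rcases le_or_gt (-s) u with h | h
      · have : p₁ = u := by rw [hp₁, max_eq_left h]
        rw [this, intervalIntegral.integral_same]
        simpa using h03
      · apply ibp_bound b a x u p₁ lam h_u_p₁ hlam (fun ξ hξ => hlow ξ (hsub1 hξ))
        left
        intro ξ hξ
        have hple : p₁ = -s := by rw [hp₁, max_eq_right h.le]
        exact sign_out ξ (Or.inl (hple ▸ hξ.2))
    have bd2 : ‖∫ ξ in p₁..p₂, EE b a x ξ‖ ≤ 3 / lam := by
      apply ibp_bound b a x p₁ p₂ lam h_p₁_p₂ hlam (fun ξ hξ => hlow ξ (hsub2 hξ))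
      right
      intro ξ hξ
      exact sign_in ξ (le_trans (le_max_right _ _) hξ.1) (le_trans hξ.2 (min_le_right _ _))
    have bd3 : ‖∫ ξ in p₂..v, EE b a x ξ‖ ≤ 3 / lam := by
      rcases le_or_gt v s with h | h
      · have : p₂ = v := by rw [hp₂, min_eq_left h]
        rw [this, intervalIntegral.integral_same]
        simpa using h03
      · apply ibp_bound b a x p₂ v lam h_p₂_v hlam (fun ξ hξ => hlow ξ (hsub3 hξ))
        left
        intro ξ hξ
        have hple : p₂ = s := by rw [hp₂, min_eq_right h.le]
        exact sign_out ξ (Or.inr (hple ▸ hξ.1))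
    have hadd : ∫ ξ in u..v, EE b a x ξ
        = (∫ ξ in u..p₁, EE b a x ξ) + (∫ ξ in p₁..p₂, EE b a x ξ) + (∫ ξ in p₂..v, EE b a x ξ) := by
      rw [intervalIntegral.integral_add_adjacent_intervals (intgEE b a x u p₁) (intgEE b a x p₁ p₂),
        intervalIntegral.integral_add_adjacent_intervals (intgEE b a x u p₂) (intgEE b a x p₂ v)]
    rw [hadd]
    calc ‖_ + _ + _‖ ≤ ‖(∫ ξ in u..p₁, EE b a x ξ) + (∫ ξ in p₁..p₂, EE b a x ξ)‖
        + ‖∫ ξ in p₂..v, EE b a x ξ‖ := norm_add_le _ _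
      _ ≤ ‖∫ ξ in u..p₁, EE b a x ξ‖ + ‖∫ ξ in p₁..p₂, EE b a x ξ‖
        + ‖∫ ξ in p₂..v, EE b a x ξ‖ := by gcongr; exact norm_add_le _ _
      _ ≤ 3 / lam + 3 / lam + 3 / lam := by gcongr
      _ = 9 / lam := by ring
/-- any three reals can be sorted, preserving the product of distances -/
lemma sort3 (p q r : ℝ) : ∃ t₁ t₂ t₃ : ℝ, t₁ ≤ t₂ ∧ t₂ ≤ t₃ ∧
    ∀ ξ : ℝ, |ξ - t₁| * |ξ - t₂| * |ξ - t₃| = |ξ - p| * |ξ - q| * |ξ - r| := by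
  rcases le_total p q with h1 | h1 <;> rcases le_total q r with h2 | h2 <;>
    rcases le_total p r with h3 | h3
  · exact ⟨p, q, r, h1, h2, fun ξ => rfl⟩
  · exact ⟨p, q, r, h1, h2, fun ξ => rfl⟩
  · exact ⟨p, r, q, h3, h2, fun ξ => by ring⟩
  · exact ⟨r, p, q, h3, h1, fun ξ => by ring⟩
  · exact ⟨q, p, r, h1, h3, fun ξ => by ring⟩
  · exact ⟨q, r, p, h2, h3, fun ξ => by ring⟩
  · exact ⟨p, r, q, h3, h2, fun ξ => by ring⟩
  · exact ⟨r, q, p, h2, h1, fun ξ => by ring⟩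

/-- The cubic `ph1` is bounded below by `4|b|` times the product of distances to three
sorted real points (the real parts of its complex roots). -/
lemma cubic_lower (b a x : ℝ) (hb : b ≠ 0) :
    ∃ t₁ t₂ t₃ : ℝ, t₁ ≤ t₂ ∧ t₂ ≤ t₃ ∧
      ∀ ξ : ℝ, 4 * |b| * (|ξ - t₁| * |ξ - t₂| * |ξ - t₃|) ≤ |ph1 b a x ξ| := by
  classical
  set α : ℂ := ((a / (2 * b) : ℝ) : ℂ) with hα
  set β : ℂ := ((x / (4 * b) : ℝ) : ℂ) with hβ
  set P : Polynomial ℂ := Polynomial.X ^ 3 + (Polynomial.C α * Polynomial.X + Polynomial.C β)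
    with hP
  have hdeg : P.natDegree = 3 := by rw [hP]; compute_degree!
  have hmonic : P.Monic := by
    apply Polynomial.monic_X_pow_add
    apply lt_of_le_of_lt (Polynomial.degree_add_le _ _)
    rw [max_lt_iff]
    constructor
    · exact lt_of_le_of_lt (Polynomial.degree_C_mul_X_le _) (by norm_num)
    · exact lt_of_le_of_lt Polynomial.degree_C_le (by norm_num)
  have hsplits : P.Splits := IsAlgClosed.splits P
  have hcard : Multiset.card P.roots = 3 := by
    rw [← hdeg]
    exact (Polynomial.splits_iff_card_roots).mp hsplits
  obtain ⟨r₁, r₂, r₃, hroots⟩ := Multiset.card_eq_three.mp hcard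
  have hfact : P = (Multiset.map (fun a => Polynomial.X - Polynomial.C a) P.roots).prod :=
    hsplits.eq_prod_roots_of_monic hmonic
  have heval : ∀ ξ : ℂ, P.eval ξ = (ξ - r₁) * ((ξ - r₂) * (ξ - r₃)) := by
    intro ξ
    conv_lhs => rw [hfact, hroots]
    simp [Multiset.prod_cons]
  have hkey : ∀ ξ : ℝ, ((ph1 b a x ξ : ℝ) : ℂ)
      = 4 * b * ((ξ - r₁) * ((ξ - r₂) * (ξ - r₃))) := by
    intro ξ
    rw [← heval ξ]
    rw [hP]
    simp only [Polynomial.eval_add, Polynomial.eval_mul, Polynomial.eval_pow,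
      Polynomial.eval_X, Polynomial.eval_C, hα, hβ]
    unfold ph1
    have hbC : (b : ℂ) ≠ 0 := by exact_mod_cast hb
    push_cast
    field_simp
    ring
  obtain ⟨t₁, t₂, t₃, ht12, ht23, hprod⟩ := sort3 r₁.re r₂.re r₃.re
  refine ⟨t₁, t₂, t₃, ht12, ht23, fun ξ => ?_⟩
  rw [hprod ξ]
  have hnorm : |ph1 b a x ξ| = 4 * |b| * (‖(ξ:ℂ) - r₁‖ * (‖(ξ:ℂ) - r₂‖ * ‖(ξ:ℂ) - r₃‖)) := by
    have : |ph1 b a x ξ| = ‖((ph1 b a x ξ : ℝ) : ℂ)‖ := by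
      rw [Complex.norm_real, Real.norm_eq_abs]
    rw [this, hkey ξ]
    simp only [norm_mul, Complex.norm_real, Real.norm_eq_abs]
    norm_num
  rw [hnorm]
  have hre : ∀ z : ℂ, ∀ t : ℝ, t = z.re → |ξ - t| ≤ ‖(ξ:ℂ) - z‖ := by
    intro z t ht
    have : ((ξ:ℂ) - z).re = ξ - t := by simp [ht]
    calc |ξ - t| = |((ξ:ℂ) - z).re| := by rw [this]
      _ ≤ ‖(ξ:ℂ) - z‖ := Complex.abs_re_le_norm _
      _ = ‖(ξ:ℂ) - z‖ := rfl
  have h1 := hre r₁ r₁.re rfl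
  have h2 := hre r₂ r₂.re rfl
  have h3 := hre r₃ r₃.re rfl
  have hb4 : (0:ℝ) ≤ 4 * |b| := by positivity
  apply mul_le_mul_of_nonneg_left _ hb4
  rw [mul_assoc]
  exact mul_le_mul h1 (mul_le_mul h2 h3 (abs_nonneg _) (norm_nonneg _))
    (by positivity) (norm_nonneg _)
/-- Main interval bound, case `b > 0`. -/
lemma interval_bound (b a x : ℝ) (hb : 0 < b) (R : ℝ) (hR : 0 ≤ R) :
    ‖∫ ξ in (-R)..R, EE b a x ξ‖ ≤ 15 * (b ^ ((1:ℝ)/4))⁻¹ := by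
  obtain ⟨t₁, t₂, t₃, h12, h23, hcub⟩ := cubic_lower b a x (ne_of_gt hb)
  rw [abs_of_pos hb] at hcub
  set c := b ^ ((1:ℝ)/4) with hcdef
  have hc : 0 < c := Real.rpow_pos_of_pos hb _
  have hc4 : c ^ (4:ℕ) = b := by
    rw [hcdef, ← Real.rpow_natCast (b ^ ((1:ℝ)/4)) 4, ← Real.rpow_mul hb.le]
    norm_num
  set δ := c⁻¹ with hδdef
  have hδ : 0 < δ := by positivity
  set lam := 4 * c with hlamdef
  have hlam : 0 < lam := by positivity
  have lower : ∀ ξ : ℝ, δ ≤ |ξ - t₁| → δ ≤ |ξ - t₂| → δ ≤ |ξ - t₃| → lam ≤ |ph1 b a x ξ| := by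
    intro ξ hd1 hd2 hd3
    have hstep : δ * δ * δ ≤ |ξ - t₁| * |ξ - t₂| * |ξ - t₃| := by
      apply mul_le_mul (mul_le_mul hd1 hd2 hδ.le (abs_nonneg _)) hd3 hδ.le
      positivity
    have hval : 4 * b * (δ * δ * δ) = lam := by
      rw [hlamdef, hδdef, ← hc4]
      field_simp
    calc lam = 4 * b * (δ * δ * δ) := hval.symm
      _ ≤ 4 * b * (|ξ - t₁| * |ξ - t₂| * |ξ - t₃|) :=
        mul_le_mul_of_nonneg_left hstep (by positivity)
      _ ≤ |ph1 b a x ξ| := hcub ξ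
  have habs1 : ∀ ξ t : ℝ, δ ≤ ξ - t → δ ≤ |ξ - t| := fun ξ t h => le_trans h (le_abs_self _)
  have habs2 : ∀ ξ t : ℝ, δ ≤ t - ξ → δ ≤ |ξ - t| := by
    intro ξ t h
    rw [abs_sub_comm]
    exact le_trans h (le_abs_self _)
  -- clipping to [-R, R]
  set clip : ℝ → ℝ := fun z => max (-R) (min R z) with hclip
  have clip_mono : ∀ {z w : ℝ}, z ≤ w → clip z ≤ clip w :=
    fun h => max_le_max le_rfl (min_le_min le_rfl h)
  have clip_lb : ∀ z, -R ≤ clip z := fun z => le_max_left _ _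
  have clip_ub : ∀ z, clip z ≤ R := fun z => max_le (by linarith) (min_le_left _ _)
  have clip_lip : ∀ {z w : ℝ}, z ≤ w → clip w - clip z ≤ w - z := by
    intro z w h
    have h1 : min R w ≤ min R z + (w - z) := by
      rcases le_total R z with hz | hz
      · rw [min_eq_left hz]
        have := min_le_left R w
        linarith
      · rw [min_eq_right hz]
        have := min_le_right R w
        linarith
    have h2 : clip w ≤ clip z + (w - z) := by
      rw [hclip]
      dsimp only
      apply max_le
      · have := le_max_left (-R) (min R z)
        linarith
      · have := le_max_right (-R) (min R z)
        linarith
    linarith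
  have clip_sub : ∀ {z w : ℝ}, clip z < clip w → z ≤ clip z ∧ clip w ≤ w := by
    intro z w h
    constructor
    · have hzR : z ≤ R := by
        by_contra hz
        push_neg at hz
        have hcz : clip z = R := by
          rw [hclip]
          dsimp only
          rw [min_eq_left hz.le, max_eq_right (by linarith : -R ≤ R)]
        have := clip_ub w
        linarith
      calc z = min R z := (min_eq_right hzR).symm
        _ ≤ clip z := le_max_right _ _
    · have hwR : -R ≤ w := by
        by_contra hw
        push_neg at hw
        have hcw : clip w = -R := by
          rw [hclip]
          dsimp only
          rw [max_eq_left]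
          exact le_trans (min_le_right _ _) hw.le
        have := clip_lb z
        linarith
      rw [hclip]
      dsimp only
      exact max_le hwR (min_le_right _ _)
  -- cut points
  set u₀ := t₁ - δ with hu₀
  set u₁ := t₁ + δ with hu₁
  set u₂ := max (t₁ + δ) (t₂ - δ) with hu₂
  set u₃ := t₂ + δ with hu₃
  set u₄ := max (t₂ + δ) (t₃ - δ) with hu₄
  set u₅ := t₃ + δ with hu₅
  have hu01 : u₀ ≤ u₁ := by rw [hu₀, hu₁]; linarith
  have hu12 : u₁ ≤ u₂ := le_max_left _ _
  have hu23 : u₂ ≤ u₃ := max_le (by rw [hu₃]; linarith) (by rw [hu₃]; linarith)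
  have hu34 : u₃ ≤ u₄ := le_max_left _ _
  have hu45 : u₄ ≤ u₅ := max_le (by rw [hu₅]; linarith) (by rw [hu₅]; linarith)
  set v₀ := clip u₀ with hv₀
  set v₁ := clip u₁ with hv₁
  set v₂ := clip u₂ with hv₂
  set v₃ := clip u₃ with hv₃
  set v₄ := clip u₄ with hv₄
  set v₅ := clip u₅ with hv₅
  have hv01 : v₀ ≤ v₁ := clip_mono hu01
  have hv12 : v₁ ≤ v₂ := clip_mono hu12
  have hv23 : v₂ ≤ v₃ := clip_mono hu23
  have hv34 : v₃ ≤ v₄ := clip_mono hu34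
  have hv45 : v₄ ≤ v₅ := clip_mono hu45
  -- the seven pieces
  have bA : ‖∫ ξ in (-R)..v₀, EE b a x ξ‖ ≤ 9 / lam := by
    rcases (clip_lb u₀).eq_or_lt with he | hlt
    · rw [← hv₀] at he
      rw [← he, intervalIntegral.integral_same]
      simp
      positivity
    · have hv₀eq : v₀ ≤ u₀ := by
        rcases max_choice (-R) (min R u₀) with h | h
        · exfalso
          have h' : clip u₀ = -R := h
          rw [h'] at hlt
          exact lt_irrefl _ hlt
        · have h' : clip u₀ = min R u₀ := h
          rw [hv₀, h']
          exact min_le_right _ _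
      apply good_bound b a x (-R) v₀ lam hb hlt.le hlam
      intro ξ hξ
      have hle : ξ ≤ t₁ - δ := by
        have := hξ.2
        rw [hu₀] at hv₀eq
        linarith
      exact lower ξ (habs2 ξ t₁ (by linarith)) (habs2 ξ t₂ (by linarith))
        (habs2 ξ t₃ (by linarith))
  have bB1 : ‖∫ ξ in v₀..v₁, EE b a x ξ‖ ≤ 2 * δ := by
    refine le_trans (trivial_bound b a x v₀ v₁ hv01) ?_
    have := clip_lip hu01
    rw [hu₀, hu₁] at this
    rw [← hv₀, ← hv₁] at this
    linarith
  have bC1 : ‖∫ ξ in v₁..v₂, EE b a x ξ‖ ≤ 9 / lam := by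
    rcases hv12.eq_or_lt with he | hlt
    · rw [← he, intervalIntegral.integral_same]
      simp
      positivity
    · obtain ⟨hz, hw⟩ := clip_sub hlt
      have hu₂eq : u₂ = t₂ - δ := by
        rcases max_choice (t₁ + δ) (t₂ - δ) with h | h
        · exfalso
          have : u₂ ≤ u₁ := by rw [hu₂, h, hu₁]
          have := clip_mono this
          rw [← hv₂, ← hv₁] at this
          linarith
        · rw [hu₂, h]
      apply good_bound b a x v₁ v₂ lam hb hlt.le hlam
      intro ξ hξ
      have hz' : t₁ + δ ≤ v₁ := by
        rw [hv₁, ← hu₁]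
        exact hz
      have hw' : v₂ ≤ t₂ - δ := by
        rw [hv₂, ← hu₂eq]
        exact hw
      have hl : t₁ + δ ≤ ξ := le_trans hz' hξ.1
      have hrr : ξ ≤ t₂ - δ := le_trans hξ.2 hw'
      exact lower ξ (habs1 ξ t₁ (by linarith)) (habs2 ξ t₂ (by linarith))
        (habs2 ξ t₃ (by linarith))
  have bB2 : ‖∫ ξ in v₂..v₃, EE b a x ξ‖ ≤ 2 * δ := by
    refine le_trans (trivial_bound b a x v₂ v₃ hv23) ?_
    have h1 := clip_lip hu23
    have h2 : t₂ - δ ≤ u₂ := le_max_right _ _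
    rw [← hv₂, ← hv₃] at h1
    rw [hu₃] at h1
    linarith
  have bC2 : ‖∫ ξ in v₃..v₄, EE b a x ξ‖ ≤ 9 / lam := by
    rcases hv34.eq_or_lt with he | hlt
    · rw [← he, intervalIntegral.integral_same]
      simp
      positivity
    · obtain ⟨hz, hw⟩ := clip_sub hlt
      have hu₄eq : u₄ = t₃ - δ := by
        rcases max_choice (t₂ + δ) (t₃ - δ) with h | h
        · exfalso
          have : u₄ ≤ u₃ := by rw [hu₄, h, hu₃]
          have := clip_mono this
          rw [← hv₄, ← hv₃] at this
          linarith
        · rw [hu₄, h]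
      apply good_bound b a x v₃ v₄ lam hb hlt.le hlam
      intro ξ hξ
      have hz' : t₂ + δ ≤ v₃ := by
        rw [hv₃, ← hu₃]
        exact hz
      have hw' : v₄ ≤ t₃ - δ := by
        rw [hv₄, ← hu₄eq]
        exact hw
      have hl : t₂ + δ ≤ ξ := le_trans hz' hξ.1
      have hrr : ξ ≤ t₃ - δ := le_trans hξ.2 hw'
      exact lower ξ (habs1 ξ t₁ (by linarith)) (habs1 ξ t₂ (by linarith))
        (habs2 ξ t₃ (by linarith))
  have bB3 : ‖∫ ξ in v₄..v₅, EE b a x ξ‖ ≤ 2 * δ := by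
    refine le_trans (trivial_bound b a x v₄ v₅ hv45) ?_
    have h1 := clip_lip hu45
    have h2 : t₃ - δ ≤ u₄ := le_max_right _ _
    rw [← hv₄, ← hv₅] at h1
    rw [hu₅] at h1
    linarith
  have bD : ‖∫ ξ in v₅..R, EE b a x ξ‖ ≤ 9 / lam := by
    rcases (clip_ub u₅).eq_or_lt with he | hlt
    · rw [← hv₅] at he
      rw [he, intervalIntegral.integral_same]
      simp
      positivity
    · have hv₅ge : u₅ ≤ v₅ := by
        rcases le_or_gt u₅ R with h | h
        · calc u₅ = min R u₅ := (min_eq_right h).symm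
            _ ≤ v₅ := le_max_right _ _
        · exfalso
          have : v₅ = R := by
            rw [hv₅, hclip]
            dsimp only
            rw [min_eq_left h.le, max_eq_right (by linarith : -R ≤ R)]
          linarith
      apply good_bound b a x v₅ R lam hb hlt.le hlam
      intro ξ hξ
      have hge : t₃ + δ ≤ ξ := by
        rw [hu₅] at hv₅ge
        linarith [hξ.1]
      exact lower ξ (habs1 ξ t₁ (by linarith)) (habs1 ξ t₂ (by linarith))
        (habs1 ξ t₃ (by linarith))
  -- triangle inequality chain
  have tri : ∀ p q r : ℝ, ‖∫ ξ in p..r, EE b a x ξ‖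
      ≤ ‖∫ ξ in p..q, EE b a x ξ‖ + ‖∫ ξ in q..r, EE b a x ξ‖ := by
    intro p q r
    rw [← intervalIntegral.integral_add_adjacent_intervals (intgEE b a x p q) (intgEE b a x q r)]
    exact norm_add_le _ _
  have total : ‖∫ ξ in (-R)..R, EE b a x ξ‖ ≤ 4 * (9 / lam) + 3 * (2 * δ) := by
    calc ‖∫ ξ in (-R)..R, EE b a x ξ‖
        ≤ ‖∫ ξ in (-R)..v₀, EE b a x ξ‖ + ‖∫ ξ in v₀..R, EE b a x ξ‖ := tri _ _ _
      _ ≤ ‖∫ ξ in (-R)..v₀, EE b a x ξ‖ + (‖∫ ξ in v₀..v₁, EE b a x ξ‖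
          + ‖∫ ξ in v₁..R, EE b a x ξ‖) := by linarith [tri v₀ v₁ R]
      _ ≤ ‖∫ ξ in (-R)..v₀, EE b a x ξ‖ + (‖∫ ξ in v₀..v₁, EE b a x ξ‖
          + (‖∫ ξ in v₁..v₂, EE b a x ξ‖ + ‖∫ ξ in v₂..R, EE b a x ξ‖)) := by
            linarith [tri v₁ v₂ R]
      _ ≤ ‖∫ ξ in (-R)..v₀, EE b a x ξ‖ + (‖∫ ξ in v₀..v₁, EE b a x ξ‖
          + (‖∫ ξ in v₁..v₂, EE b a x ξ‖ + (‖∫ ξ in v₂..v₃, EE b a x ξ‖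
          + ‖∫ ξ in v₃..R, EE b a x ξ‖))) := by linarith [tri v₂ v₃ R]
      _ ≤ ‖∫ ξ in (-R)..v₀, EE b a x ξ‖ + (‖∫ ξ in v₀..v₁, EE b a x ξ‖
          + (‖∫ ξ in v₁..v₂, EE b a x ξ‖ + (‖∫ ξ in v₂..v₃, EE b a x ξ‖
          + (‖∫ ξ in v₃..v₄, EE b a x ξ‖ + ‖∫ ξ in v₄..R, EE b a x ξ‖)))) := by
            linarith [tri v₃ v₄ R]
      _ ≤ ‖∫ ξ in (-R)..v₀, EE b a x ξ‖ + (‖∫ ξ in v₀..v₁, EE b a x ξ‖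
          + (‖∫ ξ in v₁..v₂, EE b a x ξ‖ + (‖∫ ξ in v₂..v₃, EE b a x ξ‖
          + (‖∫ ξ in v₃..v₄, EE b a x ξ‖ + (‖∫ ξ in v₄..v₅, EE b a x ξ‖
          + ‖∫ ξ in v₅..R, EE b a x ξ‖))))) := by linarith [tri v₄ v₅ R]
      _ ≤ 4 * (9 / lam) + 3 * (2 * δ) := by linarith
  refine le_trans total (le_of_eq ?_)
  rw [hlamdef, hδdef]
  field_simp
  ring
/-- Tail estimate, case `b > 0`. -/
lemma tail_bound (b a x : ℝ) (hb : 0 < b) (ε : ℝ) (hε : 0 < ε) :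
    ∃ T : ℝ, 0 ≤ T ∧ ∀ R R' : ℝ, T ≤ R → R ≤ R' →
      ‖(∫ ξ in (-R')..R', EE b a x ξ) - ∫ ξ in (-R)..R, EE b a x ξ‖ ≤ ε := by
  obtain ⟨t₁, t₂, t₃, h12, h23, hcub⟩ := cubic_lower b a x (ne_of_gt hb)
  rw [abs_of_pos hb] at hcub
  set M := max 1 (18 / (4 * b * ε)) with hM
  have hM1 : (1:ℝ) ≤ M := le_max_left _ _
  have hM0 : (0:ℝ) < M := by linarith
  have hM2 : 18 / (4 * b * ε) ≤ M := le_max_right _ _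
  set lamM := 4 * b * (M * M * M) with hlamM
  have hlamM0 : 0 < lamM := by positivity
  have hMcube : M ≤ M * M * M := by nlinarith
  have hεM : 9 / lamM + 9 / lamM ≤ ε := by
    have h18 : 18 ≤ M * (4 * b * ε) := (div_le_iff₀ (by positivity)).mp hM2
    have : 9 / lamM + 9 / lamM = 18 / lamM := by ring
    rw [this]
    rw [div_le_iff₀ hlamM0]
    nlinarith
  refine ⟨max 0 (max (t₃ + M) (M - t₁)), le_max_left _ _, ?_⟩
  intro R R' hTR hRR'
  have hR3 : t₃ + M ≤ R := le_trans (le_trans (le_max_left _ _) (le_max_right _ _)) hTR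
  have hR1 : M - t₁ ≤ R := le_trans (le_trans (le_max_right _ _) (le_max_right _ _)) hTR
  have lowerM : ∀ ξ : ℝ, M ≤ |ξ - t₁| → M ≤ |ξ - t₂| → M ≤ |ξ - t₃| → lamM ≤ |ph1 b a x ξ| := by
    intro ξ hd1 hd2 hd3
    have hstep : M * M * M ≤ |ξ - t₁| * |ξ - t₂| * |ξ - t₃| := by
      apply mul_le_mul (mul_le_mul hd1 hd2 hM0.le (abs_nonneg _)) hd3 hM0.le
      positivity
    calc lamM = 4 * b * (M * M * M) := hlamM
      _ ≤ 4 * b * (|ξ - t₁| * |ξ - t₂| * |ξ - t₃|) :=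
        mul_le_mul_of_nonneg_left hstep (by positivity)
      _ ≤ |ph1 b a x ξ| := hcub ξ
  have habs1 : ∀ ξ t : ℝ, M ≤ ξ - t → M ≤ |ξ - t| := fun ξ t h => le_trans h (le_abs_self _)
  have habs2 : ∀ ξ t : ℝ, M ≤ t - ξ → M ≤ |ξ - t| := by
    intro ξ t h
    rw [abs_sub_comm]
    exact le_trans h (le_abs_self _)
  have bR : ‖∫ ξ in R..R', EE b a x ξ‖ ≤ 9 / lamM := by
    apply good_bound b a x R R' lamM hb hRR' hlamM0
    intro ξ hξ
    have h1 : t₃ + M ≤ ξ := le_trans hR3 hξ.1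
    exact lowerM ξ (habs1 ξ t₁ (by linarith)) (habs1 ξ t₂ (by linarith))
      (habs1 ξ t₃ (by linarith))
  have bL : ‖∫ ξ in (-R')..(-R), EE b a x ξ‖ ≤ 9 / lamM := by
    apply good_bound b a x (-R') (-R) lamM hb (by linarith) hlamM0
    intro ξ hξ
    have h1 : ξ ≤ t₁ - M := by linarith [hξ.2]
    exact lowerM ξ (habs2 ξ t₁ (by linarith)) (habs2 ξ t₂ (by linarith))
      (habs2 ξ t₃ (by linarith))
  have hdecomp : (∫ ξ in (-R')..R', EE b a x ξ) - (∫ ξ in (-R)..R, EE b a x ξ)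
      = (∫ ξ in (-R')..(-R), EE b a x ξ) + (∫ ξ in R..R', EE b a x ξ) := by
    have e1 := intervalIntegral.integral_add_adjacent_intervals
      (intgEE b a x (-R') (-R)) (intgEE b a x (-R) R)
    have e2 := intervalIntegral.integral_add_adjacent_intervals
      (intgEE b a x (-R') R) (intgEE b a x R R')
    rw [← e2, ← e1]
    ring
  rw [hdecomp]
  calc ‖(∫ ξ in (-R')..(-R), EE b a x ξ) + (∫ ξ in R..R', EE b a x ξ)‖
      ≤ ‖∫ ξ in (-R')..(-R), EE b a x ξ‖ + ‖∫ ξ in R..R', EE b a x ξ‖ := norm_add_le _ _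
    _ ≤ 9 / lamM + 9 / lamM := add_le_add bL bR
    _ ≤ ε := hεM

/-- Existence and bound of the limit, case `b > 0`. -/
lemma pos_case (a b x : ℝ) (hb : 0 < b) : ∃ L : ℂ,
    Tendsto (fun R : ℝ => ∫ ξ in (-R)..R, EE b a x ξ) atTop (𝓝 L) ∧
    ‖L‖ ≤ 15 * b ^ (-(1:ℝ)/4) := by
  set F : ℝ → ℂ := fun R => ∫ ξ in (-R)..R, EE b a x ξ with hF
  have hcauchy : CauchySeq F := by
    rw [Metric.cauchySeq_iff]
    intro ε hε
    obtain ⟨T, hT0, hT⟩ := tail_bound b a x hb (ε / 2) (by linarith)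
    refine ⟨T, ?_⟩
    intro m hm n hn
    rcases le_total m n with h | h
    · calc dist (F m) (F n) = ‖F n - F m‖ := by rw [dist_eq_norm, norm_sub_rev]
        _ ≤ ε / 2 := hT m n hm h
        _ < ε := by linarith
    · calc dist (F m) (F n) = ‖F m - F n‖ := dist_eq_norm _ _
        _ ≤ ε / 2 := hT n m hn h
        _ < ε := by linarith
  obtain ⟨L, hL⟩ := cauchySeq_tendsto_of_complete hcauchy
  refine ⟨L, hL, ?_⟩
  have hrw : (15:ℝ) * b ^ (-(1:ℝ)/4) = 15 * (b ^ ((1:ℝ)/4))⁻¹ := by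
    rw [show (-(1:ℝ)/4) = -((1:ℝ)/4) by norm_num, Real.rpow_neg hb.le]
  rw [hrw]
  apply le_of_tendsto hL.norm
  filter_upwards [eventually_ge_atTop (0:ℝ)] with R hR
  exact interval_bound b a x hb R hR

/-- conjugation symmetry -/
lemma conj_EE (b a x ξ : ℝ) :
    EE b a x ξ = (starRingEnd ℂ) (EE (-b) (-a) (-x) ξ) := by
  unfold EE
  rw [← Complex.exp_conj]
  congr 1
  rw [map_mul, Complex.conj_I]
  rw [← Complex.conj_ofReal ((-b) * ξ^4 + (-a) * ξ^2 + (-x) * ξ)]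
  push_cast
  ring_nf
  simp [Complex.conj_ofReal]
  ring

lemma conj_int (b a x : ℝ) (R : ℝ) :
    (∫ ξ in (-R)..R, EE b a x ξ)
      = (starRingEnd ℂ) (∫ ξ in (-R)..R, EE (-b) (-a) (-x) ξ) := by
  have := Complex.conjCLE.toContinuousLinearMap.intervalIntegral_comp_comm
    (intgEE (-b) (-a) (-x) (-R) R)
  have h2 : (starRingEnd ℂ) (∫ ξ in (-R)..R, EE (-b) (-a) (-x) ξ)
      = ∫ ξ in (-R)..R, (starRingEnd ℂ) (EE (-b) (-a) (-x) ξ) := by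
    simpa using this.symm
  rw [h2]
  apply intervalIntegral.integral_congr
  intro ξ _
  exact conj_EE b a x ξ

end VdC

/-- Van der Corput estimate for the oscillatory integral
`I_φ(x) = ∫_ℝ exp(i(b ξ⁴ + a ξ² + x ξ)) dξ` (as an improper integral):
there exists `C > 0`, independent of `a` and `b ≠ 0`, such that the improper integral
converges to a limit `L` with `|L| ≤ C |b|^{-1/4}`. -/
theorem oscillatory_integral_bound :
    ∃ C > 0, ∀ a b : ℝ, b ≠ 0 → ∀ x : ℝ, ∃ L : ℂ,
      Tendsto (fun R : ℝ =>
          ∫ ξ in (-R)..R, Complex.exp (Complex.I * ((b * ξ ^ 4 + a * ξ ^ 2 + x * ξ : ℝ) : ℂ)))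
        atTop (𝓝 L) ∧
      ‖L‖ ≤ C * |b| ^ (-(1 : ℝ) / 4) := by
  refine ⟨15, by norm_num, ?_⟩
  intro a b hb x
  rcases hb.lt_or_gt with hneg | hpos
  · -- b < 0 : conjugate of the case -b > 0
    obtain ⟨L, hL, hLb⟩ := VdC.pos_case (-a) (-b) (-x) (by linarith)
    refine ⟨(starRingEnd ℂ) L, ?_, ?_⟩
    · have hcont : Continuous (starRingEnd ℂ) := Complex.continuous_conj
      have htd : Tendsto (fun R : ℝ => (starRingEnd ℂ)
          (∫ ξ in (-R)..R, VdC.EE (-b) (-a) (-x) ξ)) atTop (𝓝 ((starRingEnd ℂ) L)) :=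
        (hcont.tendsto L).comp hL
      have : (fun R : ℝ => ∫ ξ in (-R)..R,
          Complex.exp (Complex.I * ((b * ξ ^ 4 + a * ξ ^ 2 + x * ξ : ℝ) : ℂ)))
          = fun R : ℝ => (starRingEnd ℂ) (∫ ξ in (-R)..R, VdC.EE (-b) (-a) (-x) ξ) := by
        funext R
        exact VdC.conj_int b a x R
      rw [this]
      exact htd
    · rw [RCLike.norm_conj]
      calc ‖L‖ ≤ 15 * (-b) ^ (-(1:ℝ)/4) := hLb
        _ = 15 * |b| ^ (-(1:ℝ)/4) := by rw [abs_of_neg hneg]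
  · obtain ⟨L, hL, hLb⟩ := VdC.pos_case a b x hpos
    refine ⟨L, hL, ?_⟩
    rw [abs_of_pos hpos]
    exact hLb
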